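/- For any subset B ⊆ Y, the polar transform of the support function σ_B(x) = sup_{y∈B} ⟨x,y⟩ equals the Minkowski functional of the closed convex hull of B: (σ_B)° = μ_{closedConvexHull B}. -/

import Mathlib

open scoped Pointwise ENNReal

/-- The Minkowski functional of a set `A`, with values in `[0,∞]` and `inf ∅ = +∞`. -/
noncomputable def mink {M : Type*} [AddCommGroup M] [Module ℝ M] (A : Set M) (x : M) : ℝ≥0∞ :=
  sInf (ENNReal.ofReal '' {r : ℝ | 0 < r ∧ x ∈ r • A})

/-- The polar transform of an extended-real-valued function `g`:
`g°(y) = inf{λ > 0 : ⟨x,y⟩ ≤ λ g(x) for all x}`, with `inf ∅ = +∞`. -/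
noncomputable def polarTr {X Y : Type*} [AddCommGroup X] [Module ℝ X]
    [AddCommGroup Y] [Module ℝ Y] (p : X →ₗ[ℝ] Y →ₗ[ℝ] ℝ) (g : X → EReal) (y : Y) : ℝ≥0∞ :=
  sInf {l : ℝ≥0∞ | ∃ r : ℝ, 0 < r ∧ l = ENNReal.ofReal r ∧
    ∀ x : X, (p x y : EReal) ≤ (r : EReal) * g x}

section Aux

variable {X Y : Type*} [AddCommGroup X] [Module ℝ X] [AddCommGroup Y] [Module ℝ Y]
  (p : X →ₗ[ℝ] Y →ₗ[ℝ] ℝ)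

/-- Every continuous linear functional on `Y` with the weak topology `σ(Y,X)` is represented
by some `x : X`. -/
lemma weakBilin_dual_exists (f : WeakBilin p.flip →L[ℝ] ℝ) :
    ∃ x : X, ∀ y : Y, f y = p x y := by
  have h0 : f ⁻¹' (Metric.ball (0 : ℝ) 1) ∈ nhds (0 : WeakBilin p.flip) := by
    apply f.continuous.continuousAt.preimage_mem_nhds
    rw [map_zero]
    exact Metric.ball_mem_nhds 0 one_pos
  obtain ⟨U, hU, hsub⟩ := (LinearMap.hasBasis_weakBilin p.flip).mem_iff.mp h0
  obtain ⟨s, ε, hε, rfl⟩ := (SeminormFamily.basisSets_iff _).mp hU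
  set L : s → (WeakBilin p.flip →ₗ[ℝ] ℝ) := fun i => p (i : X) with hL
  have hker : ⨅ i : s, LinearMap.ker (L i) ≤ LinearMap.ker f.toLinearMap := by
    intro y hy
    rw [Submodule.mem_iInf] at hy
    rw [LinearMap.mem_ker]
    by_contra hfy
    have hlt : ∀ t : ℝ, |t| * |f y| < 1 := by
      intro t
      have hmem : (t • y : WeakBilin p.flip) ∈
          (s.sup (p.flip.toSeminormFamily)).ball 0 ε := by
        refine (Seminorm.mem_ball_zero _).mpr ?_
        have hsup0 : (s.sup (p.flip.toSeminormFamily)) y ≤ 0 := by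
          refine Seminorm.finset_sup_apply_le le_rfl ?_
          intro i hi
          refine (LinearMap.toSeminormFamily_apply ..).le.trans ?_; rw [norm_le_zero_iff]
          have h0' := (LinearMap.mem_ker).mp (hy ⟨i, hi⟩)
          exact h0'
        calc (s.sup (p.flip.toSeminormFamily)) ((t • y : WeakBilin p.flip))
            = ‖t‖ * (s.sup (p.flip.toSeminormFamily)) y := map_smul_eq_mul _ t y
          _ ≤ 0 := by
              have := apply_nonneg (s.sup (p.flip.toSeminormFamily)) y
              have ht := norm_nonneg t
              nlinarith [le_antisymm hsup0 this]
          _ < ε := hε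
      have := hsub hmem
      simp only [Set.mem_preimage, Metric.mem_ball, dist_zero_right] at this
      rw [map_smul] at this
      simpa [abs_mul] using this
    have h2 := hlt (2 / |f y|)
    rw [abs_div, abs_abs, abs_two, div_mul_cancel₀] at h2
    · norm_num at h2
    · exact abs_ne_zero.mpr hfy
  have hmem : f.toLinearMap ∈ Submodule.span ℝ (Set.range L) :=
    mem_span_of_iInf_ker_le_ker hker
  have hle : Submodule.span ℝ (Set.range L) ≤
      LinearMap.range (p : X →ₗ[ℝ] (WeakBilin p.flip →ₗ[ℝ] ℝ)) := by
    refine Submodule.span_le.mpr ?_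
    rintro _ ⟨i, rfl⟩
    exact ⟨(i : X), rfl⟩
  obtain ⟨x, hx⟩ := hle hmem
  exact ⟨x, fun y => (LinearMap.congr_fun hx y).symm⟩

lemma pairing_le_of_mem_closedHull (B : Set (WeakBilin p.flip)) (x : X) {c : WeakBilin p.flip}
    (hc : c ∈ closure (convexHull ℝ B)) {M : ℝ} (hM : ∀ b ∈ B, p x b ≤ M) : p x c ≤ M := by
  have hclosed : IsClosed {y : WeakBilin p.flip | p x y ≤ M} :=
    isClosed_le (WeakBilin.eval_continuous p.flip x) continuous_const
  have hconv : Convex ℝ {y : WeakBilin p.flip | p x y ≤ M} :=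
    convex_halfSpace_le (LinearMap.isLinear (p x)) M
  exact closure_minimal (convexHull_min hM hconv) hclosed hc

lemma key_iff (B : Set (WeakBilin p.flip)) {r : ℝ} (hr : 0 < r) (y : WeakBilin p.flip) :
    (∀ x : X, (p x y : EReal) ≤ (r : EReal) * (⨆ b ∈ B, (p x b : EReal))) ↔
      y ∈ r • closure (convexHull ℝ B) := by
  have hrE : (0 : EReal) < (r : EReal) := by exact_mod_cast hr
  constructor
  · intro h
    have hB : B.Nonempty := by
      by_contra h0
      rw [Set.not_nonempty_iff_eq_empty] at h0
      subst h0
      have := h 0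
      simp only [map_zero, LinearMap.zero_apply, Set.mem_empty_iff_false, iSup_false,
        iSup_bot, EReal.coe_zero] at this
      rw [EReal.mul_bot_of_pos hrE] at this
      exact (EReal.bot_lt_zero.not_ge this).elim
    set C := closure (convexHull ℝ B) with hC
    have hz : (r⁻¹ • y : WeakBilin p.flip) ∈ C := by
      by_contra hz
      obtain ⟨f, u, hfu, huz⟩ :=
        geometric_hahn_banach_closed_point ((convex_convexHull ℝ B).closure)
          isClosed_closure hz
      obtain ⟨x, hx⟩ := weakBilin_dual_exists p f
      have hBC : B ⊆ C := (subset_convexHull ℝ B).trans subset_closure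
      have hub : ∀ b ∈ B, p x b ≤ u := fun b hb => by
        exact le_of_lt (lt_of_eq_of_lt (hx b).symm (hfu b (hBC hb)))
      set g : EReal := ⨆ b ∈ B, (p x b : EReal) with hg
      obtain ⟨b₀, hb₀⟩ := hB
      have hgbot : g ≠ ⊥ := by
        refine ne_bot_of_le_ne_bot (EReal.coe_ne_bot (p x b₀)) ?_
        exact le_iSup₂ (f := fun b _ => ((p x b : EReal))) b₀ hb₀
      have hgtop : g ≠ ⊤ := by
        refine ne_top_of_le_ne_top (EReal.coe_ne_top u) ?_
        exact iSup₂_le fun b hb => EReal.coe_le_coe_iff.mpr (hub b hb)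
      set M : ℝ := g.toReal with hM
      have hgM : g = (M : EReal) := (EReal.coe_toReal hgtop hgbot).symm
      have hMu : M ≤ u := by
        have : g ≤ (u : EReal) := iSup₂_le fun b hb => EReal.coe_le_coe_iff.mpr (hub b hb)
        rw [hgM] at this
        exact_mod_cast this
      have hxy : p x y ≤ r * M := by
        have := h x
        rw [← hg, hgM, ← EReal.coe_mul] at this
        exact_mod_cast this
      have huz' : u < r⁻¹ * p x y := by
        have : f (r⁻¹ • y : WeakBilin p.flip) = r⁻¹ * p x y := by
          rw [map_smul, smul_eq_mul]; exact congrArg _ (hx y)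
        rwa [this] at huz
      have : r * u < p x y := by
        have := (mul_lt_mul_iff_right₀ hr).mpr huz'
        rwa [← mul_assoc, mul_inv_cancel₀ hr.ne', one_mul] at this
      have : r * u < r * u := lt_of_lt_of_le this (hxy.trans (by nlinarith))
      exact this.false
    refine ⟨r⁻¹ • y, hz, ?_⟩
    simp [smul_smul, mul_inv_cancel₀ hr.ne']
  · rintro ⟨c, hc, rfl⟩
    intro x
    have hB : B.Nonempty := by
      rcases (convexHull ℝ B).eq_empty_or_nonempty with he | hne
      · rw [he, closure_empty] at hc; exact absurd hc (Set.notMem_empty c)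
      · rcases hne with ⟨w, hw⟩
        exact Set.nonempty_coe_sort.mp (by
          by_contra h0
          rw [not_nonempty_iff] at h0
          have : B = ∅ := Set.eq_empty_iff_forall_notMem.mpr fun b hb => h0.false ⟨b, hb⟩
          rw [this, convexHull_empty] at hw
          exact hw)
    obtain ⟨b₀, hb₀⟩ := hB
    set g : EReal := ⨆ b ∈ B, (p x b : EReal) with hg
    rcases eq_or_ne g ⊤ with htop | htop
    · rw [htop, EReal.mul_top_of_pos (by exact_mod_cast hr)]
      exact le_top
    · have hgbot : g ≠ ⊥ := by
        refine ne_bot_of_le_ne_bot (EReal.coe_ne_bot (p x b₀)) ?_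
        exact le_iSup₂ (f := fun b _ => ((p x b : EReal))) b₀ hb₀
      set M : ℝ := g.toReal with hM
      have hgM : g = (M : EReal) := (EReal.coe_toReal htop hgbot).symm
      have hub : ∀ b ∈ B, p x b ≤ M := fun b hb => by
        have : (p x b : EReal) ≤ g := le_iSup₂ (f := fun b _ => ((p x b : EReal))) b hb
        rw [hgM] at this
        exact_mod_cast this
      have hcM : p x c ≤ M := pairing_le_of_mem_closedHull p B x hc hub
      have : p x (r • c : WeakBilin p.flip) ≤ r * M := by
        refine ((p x).map_smul r c).trans_le ?_; rw [smul_eq_mul]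
        exact mul_le_mul_of_nonneg_left hcM hr.le
      rw [hgM, ← EReal.coe_mul]
      show ((p x (r • c : WeakBilin p.flip) : ℝ) : EReal) ≤ ((r * M : ℝ) : EReal)
      exact_mod_cast this

end Aux

/-- The polar transform of the support function `σ_B` is the Minkowski functional of the
closed convex hull of `B` (for the weak topology `σ(Y,X)`). -/
theorem polarTr_supportFn {X Y : Type*} [AddCommGroup X] [Module ℝ X]
    [AddCommGroup Y] [Module ℝ Y] (p : X →ₗ[ℝ] Y →ₗ[ℝ] ℝ)
    (B : Set (WeakBilin p.flip)) :
    ∀ y : WeakBilin p.flip,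
      polarTr p (fun x : X => ⨆ b ∈ B, (p x b : EReal)) y =
        mink (closure (convexHull ℝ B)) y := by
  intro y
  unfold polarTr mink
  congr 1
  ext l
  constructor
  · rintro ⟨r, hr, rfl, hcond⟩
    exact ⟨r, ⟨hr, (key_iff p B hr y).mp hcond⟩, rfl⟩
  · rintro ⟨r, ⟨hr, hmem⟩, rfl⟩
    exact ⟨r, hr, rfl, (key_iff p B hr y).mpr hmem⟩
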